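/- Let G be a split graph on vertices {1,…,n} with partition into a clique C and a stable set S. Let A, B ⊆ C and U ⊆ S be such that A ∪ U and B ∪ U are cliques of G, and let ε ∈ {+1,−1}. Then, as subsets of the Hansen polytope H(G), [ε, A ∪ U] ∩ [ε, B ∪ U] = [ε, (A ∩ B) ∪ U] ∩ [ε, A ∪ B ∪ U]. -/

import Mathlib

/-- A finset of vertices is stable (independent) in `G` if no two of its elements are adjacent. -/
def IsStable {n : ℕ} (G : SimpleGraph (Fin n)) (I : Finset (Fin n)) : Prop :=
  ∀ ⦃a⦄, a ∈ I → ∀ ⦃b⦄, b ∈ I → ¬ G.Adj a b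

/-- The point `e_0 + ∑_{i ∈ I} e_i ∈ ℝ^{n+1}`. -/
def hansenVert {n : ℕ} (I : Finset (Fin n)) : Fin (n + 1) → ℝ :=
  fun j => Fin.cases 1 (fun i => if i ∈ I then 1 else 0) j

/-- The Hansen polytope of `G`. -/
def hansenPolytope {n : ℕ} (G : SimpleGraph (Fin n)) : Set (Fin (n + 1) → ℝ) :=
  convexHull ℝ
    {x | ∃ I : Finset (Fin n), IsStable G I ∧ (x = hansenVert I ∨ x = -hansenVert I)}

/-- The face `[ε, K] = { x ∈ H(G) : ε·(−x_0 + 2·∑_{i ∈ K} x_i) = 1 }` of the Hansen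
polytope, for a sign `ε` and a clique `K`. -/
def hFace {n : ℕ} (G : SimpleGraph (Fin n)) (ε : ℝ) (K : Finset (Fin n)) :
    Set (Fin (n + 1) → ℝ) :=
  {x ∈ hansenPolytope G | ε * (-(x 0) + 2 * (∑ i ∈ K, x i.succ)) = 1}

lemma sum_hansenVert {n : ℕ} (I K : Finset (Fin n)) :
    ∑ i ∈ K, hansenVert I i.succ = ((K ∩ I).card : ℝ) := by
  simp [hansenVert, Finset.sum_ite_mem]

lemma card_inter_le_one {n : ℕ} {G : SimpleGraph (Fin n)} {K I : Finset (Fin n)}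
    (hK : G.IsClique (↑K : Set (Fin n))) (hI : IsStable G I) : (K ∩ I).card ≤ 1 := by
  refine Finset.card_le_one.mpr ?_
  intro a ha b hb
  simp only [Finset.mem_inter] at ha hb
  by_contra hne
  exact hI ha.2 hb.2 (hK (Finset.mem_coe.mpr ha.1) (Finset.mem_coe.mpr hb.1) hne)

lemma hansen_bound {n : ℕ} (G : SimpleGraph (Fin n)) (K : Finset (Fin n))
    (hK : G.IsClique (↑K : Set (Fin n))) {x : Fin (n + 1) → ℝ}
    (hx : x ∈ hansenPolytope G) :
    |(-(x 0) + 2 * ∑ i ∈ K, x i.succ)| ≤ 1 := by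
  have hconv : Convex ℝ {y : Fin (n + 1) → ℝ | |(-(y 0) + 2 * ∑ i ∈ K, y i.succ)| ≤ 1} := by
    intro y hy z hz a b ha hb hab
    simp only [Set.mem_setOf_eq] at hy hz ⊢
    have hsums : ∑ i ∈ K, ((a • y + b • z) : Fin (n + 1) → ℝ) i.succ
        = a * ∑ i ∈ K, y i.succ + b * ∑ i ∈ K, z i.succ := by
      simp only [Pi.add_apply, Pi.smul_apply, smul_eq_mul, Finset.sum_add_distrib,
        ← Finset.mul_sum]
    have hlin : -(((a • y + b • z) : Fin (n + 1) → ℝ) 0)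
        + 2 * ∑ i ∈ K, ((a • y + b • z) : Fin (n + 1) → ℝ) i.succ
        = a * (-(y 0) + 2 * ∑ i ∈ K, y i.succ) + b * (-(z 0) + 2 * ∑ i ∈ K, z i.succ) := by
      rw [hsums]
      simp only [Pi.add_apply, Pi.smul_apply, smul_eq_mul]
      ring
    rw [hlin]
    calc |a * (-(y 0) + 2 * ∑ i ∈ K, y i.succ) + b * (-(z 0) + 2 * ∑ i ∈ K, z i.succ)|
        ≤ |a * (-(y 0) + 2 * ∑ i ∈ K, y i.succ)| + |b * (-(z 0) + 2 * ∑ i ∈ K, z i.succ)| :=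
          abs_add_le _ _
      _ = a * |(-(y 0) + 2 * ∑ i ∈ K, y i.succ)| + b * |(-(z 0) + 2 * ∑ i ∈ K, z i.succ)| := by
          rw [abs_mul, abs_mul, abs_of_nonneg ha, abs_of_nonneg hb]
      _ ≤ a * 1 + b * 1 := by
          gcongr
      _ = 1 := by linarith
  refine convexHull_min ?_ hconv hx
  rintro y ⟨I, hI, hy | hy⟩ <;> subst hy
  · have hc := card_inter_le_one hK hI
    have h0 : hansenVert I 0 = (1 : ℝ) := rfl
    rw [Set.mem_setOf_eq, h0, sum_hansenVert]
    interval_cases h : (K ∩ I).card <;> norm_num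
  · have hc := card_inter_le_one hK hI
    have h0 : (-hansenVert I : Fin (n + 1) → ℝ) 0 = (-1 : ℝ) := rfl
    have hs : ∑ i ∈ K, (-hansenVert I : Fin (n + 1) → ℝ) i.succ
        = -((K ∩ I).card : ℝ) := by
      simp only [Pi.neg_apply, Finset.sum_neg_distrib]
      rw [sum_hansenVert]
    rw [Set.mem_setOf_eq, h0, hs]
    interval_cases h : (K ∩ I).card <;> norm_num

/-- Lemma 4 (i): for a split graph `G = C ∪ S`, subsets `A, B ⊆ C` and `U ⊆ S` with
`A ∪ U` and `B ∪ U` cliques, and a sign `ε`,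
`[ε, A ∪ U] ∩ [ε, B ∪ U] = [ε, (A ∩ B) ∪ U] ∩ [ε, A ∪ B ∪ U]`. -/
theorem hFace_intersection_same_sign {n : ℕ} (G : SimpleGraph (Fin n))
    (C S : Finset (Fin n)) (hdisj : Disjoint C S) (hcover : C ∪ S = Finset.univ)
    (hC : G.IsClique (↑C : Set (Fin n))) (hS : IsStable G S)
    (A B U : Finset (Fin n)) (hA : A ⊆ C) (hB : B ⊆ C) (hU : U ⊆ S)
    (hAU : G.IsClique (↑(A ∪ U) : Set (Fin n)))
    (hBU : G.IsClique (↑(B ∪ U) : Set (Fin n)))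
    (ε : ℝ) (hε : ε = 1 ∨ ε = -1) :
    hFace G ε (A ∪ U) ∩ hFace G ε (B ∪ U) =
      hFace G ε ((A ∩ B) ∪ U) ∩ hFace G ε (A ∪ B ∪ U) := by
  have key : ∀ K : Finset (Fin n), G.IsClique (↑K : Set (Fin n)) →
      ∀ x ∈ hansenPolytope G, ε * (-(x 0) + 2 * ∑ i ∈ K, x i.succ) ≤ 1 := by
    intro K hK x hx
    have h := abs_le.mp (hansen_bound G K hK hx)
    rcases hε with h1 | h1 <;> rw [h1] <;> cases h <;> linarith
  -- cliques
  have hIU : G.IsClique (↑((A ∩ B) ∪ U) : Set (Fin n)) := by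
    refine hAU.subset ?_
    intro u hu
    simp only [Finset.coe_union, Finset.coe_inter, Set.mem_union, Set.mem_inter_iff] at hu ⊢
    tauto
  have hABU : G.IsClique (↑(A ∪ B ∪ U) : Set (Fin n)) := by
    intro u hu v hv hne
    simp only [Finset.coe_union, Set.mem_union, Finset.mem_coe] at hu hv
    have memAU : ∀ w : Fin n, w ∈ A ∨ w ∈ U → w ∈ (↑(A ∪ U) : Set (Fin n)) := by
      intro w hw; simp only [Finset.coe_union, Set.mem_union, Finset.mem_coe]; exact hw
    have memBU : ∀ w : Fin n, w ∈ B ∨ w ∈ U → w ∈ (↑(B ∪ U) : Set (Fin n)) := by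
      intro w hw; simp only [Finset.coe_union, Set.mem_union, Finset.mem_coe]; exact hw
    rcases hu with (hu | hu) | hu <;> rcases hv with (hv | hv) | hv
    · exact hAU (memAU u (Or.inl hu)) (memAU v (Or.inl hv)) hne
    · exact hC (Finset.mem_coe.mpr (hA hu)) (Finset.mem_coe.mpr (hB hv)) hne
    · exact hAU (memAU u (Or.inl hu)) (memAU v (Or.inr hv)) hne
    · exact hC (Finset.mem_coe.mpr (hB hu)) (Finset.mem_coe.mpr (hA hv)) hne
    · exact hBU (memBU u (Or.inl hu)) (memBU v (Or.inl hv)) hne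
    · exact hBU (memBU u (Or.inl hu)) (memBU v (Or.inr hv)) hne
    · exact hAU (memAU u (Or.inr hu)) (memAU v (Or.inl hv)) hne
    · exact hBU (memBU u (Or.inr hu)) (memBU v (Or.inl hv)) hne
    · exact hAU (memAU u (Or.inr hu)) (memAU v (Or.inr hv)) hne
  -- disjointness
  have hdAU : Disjoint A U := hdisj.mono hA hU
  have hdBU : Disjoint B U := hdisj.mono hB hU
  have hdIU : Disjoint (A ∩ B) U := hdAU.mono_left Finset.inter_subset_left
  have hdABU : Disjoint (A ∪ B) U := Finset.disjoint_union_left.mpr ⟨hdAU, hdBU⟩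
  -- the sum identity
  have hsum : ∀ x : Fin (n + 1) → ℝ,
      (∑ i ∈ A ∪ U, x i.succ) + (∑ i ∈ B ∪ U, x i.succ)
        = (∑ i ∈ (A ∩ B) ∪ U, x i.succ) + (∑ i ∈ A ∪ B ∪ U, x i.succ) := by
    intro x
    rw [Finset.sum_union hdAU, Finset.sum_union hdBU, Finset.sum_union hdIU,
      Finset.sum_union hdABU]
    have h := Finset.sum_union_inter (s₁ := A) (s₂ := B) (f := fun i => x i.succ)
    linarith
  ext x
  simp only [hFace, Set.mem_inter_iff, Set.mem_setOf_eq]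
  constructor
  · rintro ⟨⟨hx, h1⟩, _, h2⟩
    have b3 := key _ hIU x hx
    have b4 := key _ hABU x hx
    have hs := hsum x
    have heq : ε * (-(x 0) + 2 * ∑ i ∈ A ∪ U, x i.succ)
        + ε * (-(x 0) + 2 * ∑ i ∈ B ∪ U, x i.succ)
        = ε * (-(x 0) + 2 * ∑ i ∈ (A ∩ B) ∪ U, x i.succ)
        + ε * (-(x 0) + 2 * ∑ i ∈ A ∪ B ∪ U, x i.succ) := by
      linear_combination 2 * ε * hs
    exact ⟨⟨hx, by linarith⟩, hx, by linarith⟩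
  · rintro ⟨⟨hx, h1⟩, _, h2⟩
    have b3 := key _ hAU x hx
    have b4 := key _ hBU x hx
    have hs := hsum x
    have heq : ε * (-(x 0) + 2 * ∑ i ∈ A ∪ U, x i.succ)
        + ε * (-(x 0) + 2 * ∑ i ∈ B ∪ U, x i.succ)
        = ε * (-(x 0) + 2 * ∑ i ∈ (A ∩ B) ∪ U, x i.succ)
        + ε * (-(x 0) + 2 * ∑ i ∈ A ∪ B ∪ U, x i.succ) := by
      linear_combination 2 * ε * hs
    exact ⟨⟨hx, by linarith⟩, hx, by linarith⟩
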